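/- Let k ≥ 1, ℓ ≥ 1 be integers, f a monic polynomial of degree d = k+ℓ over 𝔽_q, and D ⊆ 𝔽_q with |D| = n. For g ∈ 𝔽_q[x] with deg g ≤ k−1, let R(g) be the number of distinct roots of f − g in D (so that R(g) = n − d(f,g), the number of agreements between the word of f and the codeword of g). Then for every integer m ≥ 0: q^{−k}·Σ_{g : deg g ≤ k−1} R(g)^{\underline{m}} equals n^{\underline{m}}·q^{−m} if 0 ≤ m ≤ k, equals q^{−k}·m!·W_m(f) if k+1 ≤ m ≤ k+ℓ, and equals 0 if m > k+ℓ; here x^{\underline{m}} = x(x−1)⋯(x−m+1) is the falling factorial. -/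

import Mathlib

open Polynomial


-- basic lemmas about g a
lemma gdeg {F : Type*} [Field F] (k : ℕ) (hk : 1 ≤ k) (a : Fin k → F) :
    (∑ i : Fin k, C (a i) * X ^ (i : ℕ)).natDegree < k := by
  have : (∑ i : Fin k, C (a i) * X ^ (i : ℕ)).natDegree ≤ k - 1 := by
    apply Polynomial.natDegree_sum_le_of_forall_le
    intro i _
    exact le_trans (Polynomial.natDegree_C_mul_X_pow_le _ _) (by omega)
  omega

lemma gcoeff {F : Type*} [Field F] (k : ℕ) (a : Fin k → F) (i : Fin k) :
    (∑ j : Fin k, C (a j) * X ^ (j : ℕ)).coeff (i : ℕ) = a i := by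
  rw [Polynomial.finset_sum_coeff]
  rw [Finset.sum_eq_single i]
  · simp
  · intro j _ hj
    simp [Polynomial.coeff_C_mul, Polynomial.coeff_X_pow]
    intro h
    exact absurd (Fin.val_injective h.symm) hj
  · simp

lemma fg_monic {F : Type*} [Field F] (k ℓ : ℕ) (hk : 1 ≤ k)
    (f : Polynomial F) (hf : f.Monic) (hdeg : f.natDegree = k + ℓ) (a : Fin k → F) :
    (f - ∑ i : Fin k, C (a i) * X ^ (i : ℕ)).Monic ∧
    (f - ∑ i : Fin k, C (a i) * X ^ (i : ℕ)).natDegree = k + ℓ := by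
  have hlt : (∑ i : Fin k, C (a i) * X ^ (i : ℕ)).natDegree < f.natDegree := by
    rw [hdeg]; exact lt_of_lt_of_le (gdeg k hk a) (by omega)
  have hd : (∑ i : Fin k, C (a i) * X ^ (i : ℕ)).degree < f.degree :=
    Polynomial.degree_lt_degree hlt
  exact ⟨hf.sub_of_left hd, by
    rw [Polynomial.natDegree_sub_eq_left_of_natDegree_lt hlt, hdeg]⟩

lemma powersetCard_filter_eq {F : Type*} [DecidableEq F] (D : Finset F) (m : ℕ)
    (p : F → Prop) [DecidablePred p] :
    (D.filter p).powersetCard m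
      = (D.powersetCard m).filter (fun S => ∀ x ∈ S, p x) := by
  ext S
  simp only [Finset.mem_powersetCard, Finset.mem_filter, Finset.subset_iff,
    Finset.mem_filter]
  constructor
  · rintro ⟨hsub, hcard⟩
    exact ⟨⟨fun x hx => (hsub hx).1, hcard⟩, fun x hx => (hsub hx).2⟩
  · rintro ⟨⟨hsub, hcard⟩, hall⟩
    exact ⟨fun x hx => ⟨hsub hx, hall _ hx⟩, hcard⟩

lemma sum_descFactorial_eq {F : Type*} [Field F] [Fintype F] [DecidableEq F]
    (k m : ℕ) (D : Finset F) (f : Polynomial F) :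
    ∑ a : Fin k → F,
      ((D.filter (fun x =>
          (f - ∑ i : Fin k, C (a i) * X ^ (i : ℕ)).eval x = 0)).card.descFactorial m)
    = m.factorial *
      (((Finset.univ : Finset (Fin k → F)) ×ˢ D.powersetCard m).filter
        (fun p => ∀ x ∈ p.2,
          (f - ∑ i : Fin k, C (p.1 i) * X ^ (i : ℕ)).eval x = 0)).card := by
  rw [Finset.card_filter, Finset.sum_product, Finset.mul_sum]
  apply Finset.sum_congr rfl
  intro a _
  rw [Nat.descFactorial_eq_factorial_mul_choose]
  congr 1
  rw [← Finset.card_powersetCard, powersetCard_filter_eq, Finset.card_filter]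
  simp

lemma gadd {F : Type*} [Field F] (k : ℕ) (a b : Fin k → F) :
    (∑ i : Fin k, C ((a + b) i) * X ^ (i : ℕ))
      = (∑ i : Fin k, C (a i) * X ^ (i : ℕ)) + ∑ i : Fin k, C (b i) * X ^ (i : ℕ) := by
  rw [← Finset.sum_add_distrib]
  apply Finset.sum_congr rfl
  intro i _
  simp [C_add, add_mul]

lemma count_fiber {F : Type*} [Field F] [Fintype F] [DecidableEq F]
    (k m : ℕ) (hk : 1 ≤ k) (hm : m ≤ k) (S : Finset F) (hS : S.card = m) (f : Polynomial F) :
    (Finset.univ.filter (fun a : Fin k → F =>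
        ∀ x ∈ S, (f - ∑ i : Fin k, C (a i) * X ^ (i : ℕ)).eval x = 0)).card
      = Fintype.card F ^ (k - m) := by
  classical
  set g : (Fin k → F) → Polynomial F := fun a => ∑ i : Fin k, C (a i) * X ^ (i : ℕ) with hg
  let φ : (Fin k → F) →+ ({x // x ∈ S} → F) := AddMonoidHom.mk'
    (fun a α => (g a).eval (α : F))
    (by intro a b; funext α; show (g (a+b)).eval _ = _;
        rw [hg]; simp only; rw [gadd, eval_add]; rfl)
  -- surjectivity
  have hsurj : Function.Surjective φ := by
    intro w
    set r : F → F := fun x => if h : x ∈ S then w ⟨x, h⟩ else 0 with hr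
    set p := Lagrange.interpolate S id r with hp
    have hdeg : p.natDegree < k := by
      rcases eq_or_ne p 0 with h0 | h0
      · rw [h0, natDegree_zero]; omega
      · rw [Polynomial.natDegree_lt_iff_degree_lt h0]
        have := Lagrange.degree_interpolate_lt (v := (id : F → F)) (r := r) (s := S)
          (Set.injOn_id _)
        rw [← hp] at this
        have h2 : (S.card : WithBot ℕ) ≤ (k : WithBot ℕ) := by
          exact_mod_cast Nat.cast_le.mpr (hS ▸ hm)
        exact lt_of_lt_of_le this h2
    refine ⟨fun i => p.coeff i, ?_⟩
    have hgp : g (fun i : Fin k => p.coeff i) = p := by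
      rw [hg]; simp only
      rw [Fin.sum_univ_eq_sum_range (fun i => C (p.coeff i) * X ^ i)]
      conv_rhs => rw [p.as_sum_range' k hdeg]
      simp [Polynomial.C_mul_X_pow_eq_monomial]
    funext α
    show (g _).eval (α : F) = w α
    rw [hgp]
    have := Lagrange.eval_interpolate_at_node (v := (id : F → F)) (r := r)
      (Set.injOn_id _) α.2
    rw [← hp] at this
    simpa [hr] using this
  -- target vector
  set w : {x // x ∈ S} → F := fun α => f.eval (α : F) with hw
  have hfilter : (Finset.univ.filter (fun a : Fin k → F =>
        ∀ x ∈ S, (f - g a).eval x = 0)) = Finset.univ.filter (fun a => φ a = w) := by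
    apply Finset.filter_congr
    intro a _
    constructor
    · intro h
      funext α
      show (g a).eval (α : F) = f.eval (α : F)
      have h2 := h α α.2
      rw [eval_sub, sub_eq_zero] at h2
      exact h2.symm
    · intro h x hx
      have h2 := congrFun h ⟨x, hx⟩
      show (f - g a).eval x = 0
      rw [eval_sub, sub_eq_zero]
      exact (h2 : (g a).eval x = f.eval x).symm
  set s : ({x // x ∈ S} → F) → (Fin k → F) := Function.surjInv hsurj with hsdef
  have hs : ∀ y, φ (s y) = y := fun y => Function.surjInv_eq hsurj y
  let e : (Fin k → F) ≃ (({x // x ∈ S} → F) × φ.ker) :=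
  { toFun := fun a => (φ a, ⟨a - s (φ a), by
      simp [AddMonoidHom.mem_ker, map_sub, hs]⟩)
    invFun := fun p => s p.1 + p.2.1
    left_inv := fun a => by simp
    right_inv := fun p => by
      have hker : φ p.2.1 = 0 := p.2.2
      refine Prod.ext ?_ ?_
      · simp [map_add, hs, hker]
      · ext
        simp [map_add, hs, hker] }
  let e2 : {a : Fin k → F // φ a = w} ≃ φ.ker :=
  { toFun := fun a => ⟨a.1 - s w, by
      simp [AddMonoidHom.mem_ker, map_sub, hs, a.2]⟩
    invFun := fun x => ⟨s w + x.1, by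
      have hker : φ x.1 = 0 := x.2
      simp [map_add, hs, hker]⟩
    left_inv := fun a => by ext; simp
    right_inv := fun x => by ext; simp }
  have hcardk : Nat.card (Fin k → F) = Fintype.card F ^ k := by
    simp [Nat.card_eq_fintype_card]
  have hcardm : Nat.card ({x // x ∈ S} → F) = Fintype.card F ^ m := by
    simp [Nat.card_eq_fintype_card, hS]
  have h1 : Fintype.card F ^ k = Fintype.card F ^ m * Nat.card φ.ker := by
    rw [← hcardk, Nat.card_congr e, Nat.card_prod, hcardm]
  have hker_card : Nat.card φ.ker = Fintype.card F ^ (k - m) := by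
    have h2 : Fintype.card F ^ k = Fintype.card F ^ m * Fintype.card F ^ (k - m) := by
      rw [← pow_add]
      congr 1
      omega
    have hpos : 0 < Fintype.card F ^ m := pow_pos Fintype.card_pos m
    exact Nat.eq_of_mul_eq_mul_left hpos (by rw [← h1, h2])
  rw [hfilter, ← Fintype.card_subtype, ← Nat.card_eq_fintype_card, Nat.card_congr e2,
    hker_card]


lemma Pmonic {F : Type*} [Field F] (S : Finset F) : (∏ α ∈ S, (X - C α)).Monic :=
  monic_prod_of_monic _ _ (fun α _ => monic_X_sub_C α)

lemma PnatDeg {F : Type*} [Field F] (S : Finset F) :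
    (∏ α ∈ S, (X - C α)).natDegree = S.card := by
  rw [Polynomial.natDegree_prod_of_monic _ _ (fun α _ => monic_X_sub_C α)]
  simp

lemma Peval {F : Type*} [Field F] (S : Finset F) (x : F) (hx : x ∈ S) :
    (∏ α ∈ S, (X - C α)).eval x = 0 := by
  rw [Polynomial.eval_prod]
  exact Finset.prod_eq_zero hx (by simp)

lemma Pdvd {F : Type*} [Field F] [DecidableEq F] (p : Polynomial F) (hp : p ≠ 0)
    (S : Finset F) (hvan : ∀ x ∈ S, p.eval x = 0) : (∏ α ∈ S, (X - C α)) ∣ p := by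
  rw [Finset.prod_eq_multiset_prod]
  rw [Multiset.prod_X_sub_C_dvd_iff_le_roots hp]
  rw [Multiset.le_iff_subset S.nodup]
  intro x hx
  rw [Polynomial.mem_roots hp]
  exact hvan x hx

lemma gsum_eq {F : Type*} [Field F] (k : ℕ) (p : Polynomial F) (hp : p.natDegree < k) :
    (∑ i : Fin k, C (p.coeff (i : ℕ)) * X ^ (i : ℕ)) = p := by
  rw [Fin.sum_univ_eq_sum_range (fun i => C (p.coeff i) * X ^ i)]
  conv_rhs => rw [p.as_sum_range' k hp]
  simp [Polynomial.C_mul_X_pow_eq_monomial]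


lemma fg_factor {F : Type*} [Field F] [DecidableEq F] (k ℓ m : ℕ) (hk : 1 ≤ k)
    (f : Polynomial F) (hf : f.Monic) (hdeg : f.natDegree = k + ℓ)
    (a : Fin k → F) (S : Finset F) (hSc : S.card = m)
    (hvan : ∀ x ∈ S, (f - ∑ i : Fin k, C (a i) * X ^ (i : ℕ)).eval x = 0) :
    f - (∑ i : Fin k, C (a i) * X ^ (i : ℕ)) =
      (∏ α ∈ S, (X - C α)) *
        ((f - ∑ i : Fin k, C (a i) * X ^ (i : ℕ)) /ₘ (∏ α ∈ S, (X - C α))) ∧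
    ((f - ∑ i : Fin k, C (a i) * X ^ (i : ℕ)) /ₘ (∏ α ∈ S, (X - C α))).Monic ∧
    ((f - ∑ i : Fin k, C (a i) * X ^ (i : ℕ)) /ₘ (∏ α ∈ S, (X - C α))).natDegree
      = k + ℓ - m := by
  obtain ⟨hmon, hnd⟩ := fg_monic k ℓ hk f hf hdeg a
  have hdvd := Pdvd _ hmon.ne_zero S hvan
  have hmod : (f - ∑ i : Fin k, C (a i) * X ^ (i : ℕ)) %ₘ (∏ α ∈ S, (X - C α)) = 0 :=
    (Polynomial.modByMonic_eq_zero_iff_dvd (Pmonic S)).mpr hdvd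
  have heq : f - (∑ i : Fin k, C (a i) * X ^ (i : ℕ)) =
      (∏ α ∈ S, (X - C α)) *
        ((f - ∑ i : Fin k, C (a i) * X ^ (i : ℕ)) /ₘ (∏ α ∈ S, (X - C α))) := by
    conv_lhs => rw [← Polynomial.modByMonic_add_div
      (f - ∑ i : Fin k, C (a i) * X ^ (i : ℕ)) (∏ α ∈ S, (X - C α))]
    rw [hmod, zero_add]
  have hmon2 : ((f - ∑ i : Fin k, C (a i) * X ^ (i : ℕ)) /ₘ (∏ α ∈ S, (X - C α))).Monic :=
    (Pmonic S).of_mul_monic_left (heq ▸ hmon)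
  refine ⟨heq, hmon2, ?_⟩
  have hmul := Polynomial.Monic.natDegree_mul (Pmonic S) hmon2
  rw [← heq, hnd, PnatDeg, hSc] at hmul
  omega

/-- `Wcount D ℓ d j f` is the number of pairs `(h, S)` with `h` monic of degree `d - j` and
`S ⊆ D` of size `j` such that `h · ∏_{α ∈ S} (x - α)` agrees with `f` in the coefficients
of `x^{d-1}, …, x^{d-ℓ}`. -/
noncomputable def Wcount {F : Type*} [Field F] [DecidableEq F]
    (D : Finset F) (ℓ d j : ℕ) (f : Polynomial F) : ℕ :=
  Set.ncard {hS : Polynomial F × Finset F |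
    hS.1.Monic ∧ hS.1.natDegree = d - j ∧ hS.2 ⊆ D ∧ hS.2.card = j ∧
    ∀ i, 1 ≤ i → i ≤ ℓ →
      (hS.1 * ∏ α ∈ hS.2, (X - C α)).coeff (d - i) = f.coeff (d - i)}

lemma middle_count {F : Type*} [Field F] [Fintype F] [DecidableEq F]
    (k ℓ m : ℕ) (D : Finset F) (hk : 1 ≤ k) (hl : 1 ≤ ℓ) (hm : m ≤ k + ℓ)
    (f : Polynomial F) (hf : f.Monic) (hdeg : f.natDegree = k + ℓ) :
    (((Finset.univ : Finset (Fin k → F)) ×ˢ D.powersetCard m).filter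
        (fun p => ∀ x ∈ p.2,
          (f - ∑ i : Fin k, C (p.1 i) * X ^ (i : ℕ)).eval x = 0)).card
      = Wcount D ℓ (k + ℓ) m f := by
  classical
  set T := ((Finset.univ : Finset (Fin k → F)) ×ˢ D.powersetCard m).filter
        (fun p => ∀ x ∈ p.2,
          (f - ∑ i : Fin k, C (p.1 i) * X ^ (i : ℕ)).eval x = 0) with hT
  set φm : (Fin k → F) × Finset F → Polynomial F × Finset F :=
    fun p => ((f - ∑ i : Fin k, C (p.1 i) * X ^ (i : ℕ)) /ₘ (∏ α ∈ p.2, (X - C α)), p.2)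
    with hφm
  have hmemT : ∀ p : (Fin k → F) × Finset F, p ∈ T ↔
      (p.2 ⊆ D ∧ p.2.card = m) ∧ ∀ x ∈ p.2,
        (f - ∑ i : Fin k, C (p.1 i) * X ^ (i : ℕ)).eval x = 0 := by
    intro p
    rw [hT, Finset.mem_filter, Finset.mem_product, Finset.mem_powersetCard]
    simp only [Finset.mem_univ, true_and]
  -- image description
  have himg : {hS : Polynomial F × Finset F |
      hS.1.Monic ∧ hS.1.natDegree = (k + ℓ) - m ∧ hS.2 ⊆ D ∧ hS.2.card = m ∧
      ∀ i, 1 ≤ i → i ≤ ℓ →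
        (hS.1 * ∏ α ∈ hS.2, (X - C α)).coeff ((k + ℓ) - i) = f.coeff ((k + ℓ) - i)}
      = ↑(T.image φm) := by
    ext ⟨h, S⟩
    simp only [Set.mem_setOf_eq, Finset.coe_image, Set.mem_image, Finset.mem_coe]
    constructor
    · rintro ⟨hhm, hhd, hSD, hSc, hcoef⟩
      -- backward: construct a
      have hmuldeg : (h * ∏ α ∈ S, (X - C α)).natDegree = k + ℓ := by
        rw [Polynomial.Monic.natDegree_mul hhm (Pmonic S), hhd, PnatDeg, hSc]; omega
      have hmulmonic : (h * ∏ α ∈ S, (X - C α)).Monic := hhm.mul (Pmonic S)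
      set gg := f - h * ∏ α ∈ S, (X - C α) with hgg
      have hcoeff0 : ∀ j, k ≤ j → gg.coeff j = 0 := by
        intro j hj
        rw [hgg, Polynomial.coeff_sub, sub_eq_zero]
        rcases lt_trichotomy j (k + ℓ) with hlt | heqj | hgt
        · have h1 : 1 ≤ (k + ℓ) - j := by omega
          have h2 : (k + ℓ) - j ≤ ℓ := by omega
          have h3 := hcoef ((k + ℓ) - j) h1 h2
          have hj' : (k + ℓ) - ((k + ℓ) - j) = j := by omega
          rw [hj'] at h3
          exact h3.symm
        · subst heqj
          rw [← hdeg] at hmuldeg ⊢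
          rw [hf.coeff_natDegree, ← hmuldeg, hmulmonic.coeff_natDegree]
        · rw [Polynomial.coeff_eq_zero_of_natDegree_lt (by omega : f.natDegree < j),
            Polynomial.coeff_eq_zero_of_natDegree_lt (by omega : (h * ∏ α ∈ S, (X - C α)).natDegree < j)]
      have hggdeg : gg.natDegree < k := by
        rcases eq_or_ne gg 0 with h0 | h0
        · rw [h0, natDegree_zero]; omega
        · rw [Polynomial.natDegree_lt_iff_degree_lt h0, Polynomial.degree_lt_iff_coeff_zero]
          intro j hj
          exact hcoeff0 j (by exact_mod_cast hj)
      have hga : (∑ i : Fin k, C (gg.coeff (i : ℕ)) * X ^ (i : ℕ)) = gg := gsum_eq k gg hggdeg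
      have hfsub : f - gg = h * ∏ α ∈ S, (X - C α) := by rw [hgg]; ring
      refine ⟨(fun i : Fin k => gg.coeff (i : ℕ), S), (hmemT _).mpr ⟨⟨hSD, hSc⟩, ?_⟩, ?_⟩
      · intro x hx
        show (f - ∑ i : Fin k, C (gg.coeff (i : ℕ)) * X ^ (i : ℕ)).eval x = 0
        rw [hga, hfsub, Polynomial.eval_mul, Peval S x hx, mul_zero]
      · show ((f - ∑ i : Fin k, C (gg.coeff (i : ℕ)) * X ^ (i : ℕ)) /ₘ (∏ α ∈ S, (X - C α)), S)
          = (h, S)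
        rw [hga, hfsub, mul_comm]
        rw [Polynomial.mul_divByMonic_cancel_left h (Pmonic S)]
    · rintro ⟨⟨a, S'⟩, hmem, heqp⟩
      obtain ⟨⟨hsub, hcard⟩, hvan⟩ := (hmemT _).mp hmem
      obtain ⟨heq, hmon2, hnd2⟩ := fg_factor k ℓ m hk f hf hdeg a S' hcard hvan
      have hS' : S' = S := congrArg Prod.snd heqp
      have hh : (f - ∑ i : Fin k, C (a i) * X ^ (i : ℕ)) /ₘ (∏ α ∈ S', (X - C α)) = h :=
        congrArg Prod.fst heqp
      subst hS'
      rw [hh] at heq hmon2 hnd2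
      refine ⟨hmon2, hnd2, hsub, hcard, ?_⟩
      intro i h1 h2
      rw [mul_comm, ← heq, Polynomial.coeff_sub,
        Polynomial.coeff_eq_zero_of_natDegree_lt
          (lt_of_lt_of_le (gdeg k hk a) (by omega : k ≤ k + ℓ - i)), sub_zero]
  -- conclude
  rw [Wcount, himg, Set.ncard_coe_finset]
  symm
  apply Finset.card_image_of_injOn
  rintro ⟨a, S⟩ hmem ⟨a', S''⟩ hmem' heq2
  obtain ⟨⟨_, hcard⟩, hvan⟩ := (hmemT _).mp (by simpa using hmem)
  obtain ⟨⟨_, hcard'⟩, hvan'⟩ := (hmemT _).mp (by simpa using hmem')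
  have hS : S = S'' := congrArg Prod.snd heq2
  subst hS
  have hq1 : (f - ∑ i : Fin k, C (a i) * X ^ (i : ℕ)) /ₘ (∏ α ∈ S, (X - C α))
      = (f - ∑ i : Fin k, C (a' i) * X ^ (i : ℕ)) /ₘ (∏ α ∈ S, (X - C α)) :=
    congrArg Prod.fst heq2
  have e1 := (fg_factor k ℓ m hk f hf hdeg a S hcard hvan).1
  have e2 := (fg_factor k ℓ m hk f hf hdeg a' S hcard' hvan').1
  rw [hq1] at e1
  rw [← e2] at e1
  have hgeq : (∑ i : Fin k, C (a i) * X ^ (i : ℕ)) = ∑ i : Fin k, C (a' i) * X ^ (i : ℕ) := by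
    linear_combination -e1
  have : a = a' := by
    funext i
    rw [← gcoeff k a i, ← gcoeff k a' i, hgeq]
  rw [this]

/-- Theorem 5 (factorial moments): with `R(g)` the number of distinct roots of `f - g` in `D`
for a codeword polynomial `g = Σ_{i<k} aᵢ xⁱ`, the `m`-th factorial moment
`q^{-k} Σ_g R(g)^{\underline m}` equals `n^{\underline m} q^{-m}` for `m ≤ k`,
equals `q^{-k} m! W_m(f)` for `k+1 ≤ m ≤ k+ℓ`, and vanishes for `m > k+ℓ`. -/
theorem factorial_moments
    {F : Type*} [Field F] [Fintype F] [DecidableEq F]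
    (q n k ℓ : ℕ) (hq : Fintype.card F = q) (D : Finset F) (hn : D.card = n)
    (hk : 1 ≤ k) (hl : 1 ≤ ℓ)
    (f : Polynomial F) (hf : f.Monic) (hdeg : f.natDegree = k + ℓ)
    (m : ℕ) :
    (m ≤ k →
      (q : ℝ) ^ (-(k : ℤ)) * ∑ a : Fin k → F,
        (((D.filter (fun x =>
            (f - ∑ i : Fin k, C (a i) * X ^ (i : ℕ)).eval x = 0)).card.descFactorial m : ℝ))
        = (n.descFactorial m : ℝ) * (q : ℝ) ^ (-(m : ℤ))) ∧
    (k + 1 ≤ m → m ≤ k + ℓ →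
      (q : ℝ) ^ (-(k : ℤ)) * ∑ a : Fin k → F,
        (((D.filter (fun x =>
            (f - ∑ i : Fin k, C (a i) * X ^ (i : ℕ)).eval x = 0)).card.descFactorial m : ℝ))
        = (q : ℝ) ^ (-(k : ℤ)) * (m.factorial : ℝ) * (Wcount D ℓ (k + ℓ) m f : ℝ)) ∧
    (k + ℓ < m →
      (q : ℝ) ^ (-(k : ℤ)) * ∑ a : Fin k → F,
        (((D.filter (fun x =>
            (f - ∑ i : Fin k, C (a i) * X ^ (i : ℕ)).eval x = 0)).card.descFactorial m : ℝ))
        = 0) := by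
  have hq0 : 0 < q := hq ▸ Fintype.card_pos
  have hqR : (0:ℝ) < q := by exact_mod_cast hq0
  refine ⟨?_, ?_, ?_⟩
  · -- case m ≤ k
    intro hm
    rw [← Nat.cast_sum, sum_descFactorial_eq]
    have hT : (((Finset.univ : Finset (Fin k → F)) ×ˢ D.powersetCard m).filter
        (fun p => ∀ x ∈ p.2,
          (f - ∑ i : Fin k, C (p.1 i) * X ^ (i : ℕ)).eval x = 0)).card
        = n.choose m * q ^ (k - m) := by
      rw [Finset.card_filter, Finset.sum_product_right]
      have hinner : ∀ S ∈ D.powersetCard m,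
          (∑ a : Fin k → F, if (∀ x ∈ S,
            (f - ∑ i : Fin k, C (a i) * X ^ (i : ℕ)).eval x = 0) then 1 else 0)
          = q ^ (k - m) := by
        intro S hS
        rw [← Finset.card_filter]
        rw [count_fiber k m hk hm S (Finset.mem_powersetCard.mp hS).2 f, hq]
      rw [Finset.sum_congr rfl hinner, Finset.sum_const, smul_eq_mul,
        Finset.card_powersetCard, hn]
    rw [hT, Nat.descFactorial_eq_factorial_mul_choose]
    have key : (q:ℝ)^(-(k:ℤ)) * (q:ℝ)^((k-m : ℕ)) = (q:ℝ)^(-(m:ℤ)) := by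
      rw [← zpow_natCast (q:ℝ) (k-m), ← zpow_add₀ (ne_of_gt hqR)]
      congr 1
      push_cast [Nat.cast_sub hm]
      omega
    push_cast
    rw [← key]
    ring
  · -- middle case
    intro hm1 hm2
    rw [← Nat.cast_sum, sum_descFactorial_eq, middle_count k ℓ m D hk hl hm2 f hf hdeg]
    push_cast
    ring
  · -- case m > k + ℓ
    intro hm3
    have hz : ∀ a : Fin k → F, (D.filter (fun x =>
        (f - ∑ i : Fin k, C (a i) * X ^ (i : ℕ)).eval x = 0)).card.descFactorial m = 0 := by
      intro a
      rw [Nat.descFactorial_eq_zero_iff_lt]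
      obtain ⟨hmon, hnd⟩ := fg_monic k ℓ hk f hf hdeg a
      have hsub : (D.filter (fun x =>
          (f - ∑ i : Fin k, C (a i) * X ^ (i : ℕ)).eval x = 0))
          ⊆ (f - ∑ i : Fin k, C (a i) * X ^ (i : ℕ)).roots.toFinset := by
        intro x hx
        rw [Finset.mem_filter] at hx
        rw [Multiset.mem_toFinset, Polynomial.mem_roots hmon.ne_zero]
        exact hx.2
      have h1 := Finset.card_le_card hsub
      have h2 := (f - ∑ i : Fin k, C (a i) * X ^ (i : ℕ)).roots.toFinset_card_le
      have h3 := Polynomial.card_roots' (f - ∑ i : Fin k, C (a i) * X ^ (i : ℕ))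
      omega
    have hsum : ∑ a : Fin k → F, (((D.filter (fun x =>
        (f - ∑ i : Fin k, C (a i) * X ^ (i : ℕ)).eval x = 0)).card.descFactorial m : ℝ)) = 0 :=
      Finset.sum_eq_zero (fun a _ => by rw [hz a]; simp)
    rw [hsum, mul_zero]
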